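/- Team semantics coincides with single-world semantics on the full powerset model: for every classical modal Kripke model M=(W,R,V), every team X⊆W (including the empty team) and every MT₀⁻-formula φ, M,X⊨φ (team semantics) if and only if M•,X⊩•φ (satisfaction ⊩• at the point X in the full powerset model M• induced by M). -/

import Mathlib

/-- Classical modal formulas: α ::= p | ⊥ | ¬α | α∧α | α⊗α | α→α | □α | ◇α. -/
inductive CForm : Type where
  | var : ℕ → CForm
  | bot : CForm
  | neg : CForm → CForm
  | and : CForm → CForm → CForm
  | tensor : CForm → CForm → CForm
  | impl : CForm → CForm → CForm
  | box : CForm → CForm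
  | dia : CForm → CForm

/-- MT₀⁻-formulas (the dependence-atom-free fragment of full modal downward
closed team logic): φ ::= α | φ∧φ | φ⊗φ | φ∨φ | φ→φ | □φ | ◇φ with α classical.
Classical formulas are embedded structurally; the primitive classical negation
is represented by the constructor `cneg`. -/
inductive MTm : Type where
  | var : ℕ → MTm
  | bot : MTm
  | cneg : CForm → MTm
  | and : MTm → MTm → MTm
  | tensor : MTm → MTm → MTm
  | or : MTm → MTm → MTm
  | impl : MTm → MTm → MTm
  | box : MTm → MTm
  | dia : MTm → MTm

/-- The structural embedding of classical modal formulas into MT₀⁻ formulas. -/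
def CForm.toMTm : CForm → MTm
  | .var p => .var p
  | .bot => .bot
  | .neg α => .cneg α
  | .and α β => .and α.toMTm β.toMTm
  | .tensor α β => .tensor α.toMTm β.toMTm
  | .impl α β => .impl α.toMTm β.toMTm
  | .box α => .box α.toMTm
  | .dia α => .dia α.toMTm

/-- A (classical modal) Kripke model M = (W,R,V) with W nonempty. -/
structure KModel where
  W : Type
  ne : Nonempty W
  R : W → W → Prop
  V : ℕ → Set W

/-- R(X) = {w : ∃ v ∈ X, vRw}. -/
def KModel.img (M : KModel) (X : Set M.W) : Set M.W := {w | ∃ v ∈ X, M.R v w}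

/-- Y is a successor team of X: Y ⊆ R(X) and Y ∩ R(w) ≠ ∅ for every w ∈ X. -/
def KModel.succT (M : KModel) (X Y : Set M.W) : Prop :=
  Y ⊆ M.img X ∧ ∀ w ∈ X, ∃ u ∈ Y, M.R w u

/-- Team semantics for classical modal formulas. -/
def KModel.csat (M : KModel) : Set M.W → CForm → Prop
  | X, .var p => X ⊆ M.V p
  | X, .bot => X = ∅
  | X, .neg α => ∀ w ∈ X, ¬ M.csat {w} α
  | X, .and α β => M.csat X α ∧ M.csat X β
  | X, .tensor α β => ∃ Y Z, X = Y ∪ Z ∧ M.csat Y α ∧ M.csat Z β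
  | X, .impl α β => ∀ Y ⊆ X, M.csat Y α → M.csat Y β
  | X, .box α => M.csat (M.img X) α
  | X, .dia α => ∃ Y, M.succT X Y ∧ M.csat Y α

/-- Team semantics for MT₀⁻ formulas. -/
def KModel.sat (M : KModel) : Set M.W → MTm → Prop
  | X, .var p => X ⊆ M.V p
  | X, .bot => X = ∅
  | X, .cneg α => ∀ w ∈ X, ¬ M.csat {w} α
  | X, .and φ ψ => M.sat X φ ∧ M.sat X ψ
  | X, .tensor φ ψ => ∃ Y Z, X = Y ∪ Z ∧ M.sat Y φ ∧ M.sat Z ψ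
  | X, .or φ ψ => M.sat X φ ∨ M.sat X ψ
  | X, .impl φ ψ => ∀ Y ⊆ X, M.sat Y φ → M.sat Y ψ
  | X, .box φ => M.sat (M.img X) φ
  | X, .dia φ => ∃ Y, M.succT X Y ∧ M.sat Y φ

/-- The data of a tri-relation intuitionistic Kripke model: worlds, the
intuitionistic partial order ≥ (`ge w v` reads "v is accessible from w along ≥"),
a modal accessibility relation R, a ternary relation S interpreting the binary
diamond ⊗, and a valuation. -/
structure TriModel where
  W : Type
  ge : W → W → Prop
  R : W → W → Prop
  S : W → W → W → Prop
  V : ℕ → Set W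

/-- w is an ≥-endpoint. -/
def TriModel.isEnd (N : TriModel) (w : N.W) : Prop := ∀ v, N.ge w v → v = w

/-- Satisfaction ⊩• for classical modal formulas on a tri-relation intuitionistic
Kripke model (¬χ is interpreted as χ→⊥). -/
def TriModel.cbsat (N : TriModel) : N.W → CForm → Prop
  | w, .var p => w ∈ N.V p
  | w, .bot => N.isEnd w
  | w, .neg α => ∀ v, N.ge w v → N.cbsat v α → N.isEnd v
  | w, .and α β => N.cbsat w α ∧ N.cbsat w β
  | w, .tensor α β => ∃ u v, N.S w u v ∧ N.cbsat u α ∧ N.cbsat v β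
  | w, .impl α β => ∀ v, N.ge w v → N.cbsat v α → N.cbsat v β
  | w, .box α => ∀ u v, N.ge w u → N.R u v → N.cbsat v α
  | w, .dia α => ∃ v, N.R w v ∧ N.cbsat v α

/-- Satisfaction ⊩• for MT₀⁻ formulas on a tri-relation intuitionistic Kripke
model (¬χ is interpreted as χ→⊥). -/
def TriModel.bsat (N : TriModel) : N.W → MTm → Prop
  | w, .var p => w ∈ N.V p
  | w, .bot => N.isEnd w
  | w, .cneg α => ∀ v, N.ge w v → N.cbsat v α → N.isEnd v
  | w, .and φ ψ => N.bsat w φ ∧ N.bsat w ψ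
  | w, .tensor φ ψ => ∃ u v, N.S w u v ∧ N.bsat u φ ∧ N.bsat v ψ
  | w, .or φ ψ => N.bsat w φ ∨ N.bsat w ψ
  | w, .impl φ ψ => ∀ v, N.ge w v → N.bsat v φ → N.bsat v ψ
  | w, .box φ => ∀ u v, N.ge w u → N.R u v → N.bsat v φ
  | w, .dia φ => ∃ v, N.R w v ∧ N.bsat v φ

/-- The full powerset model M• induced by a Kripke model M: the worlds are all
teams of M (including the empty team), ordered by the superset relation, with the
successor-team relation as modal accessibility, R⊗(X,Y,Z) iff X=Y∪Z, and
X ∈ V°(p) iff X ⊆ V(p). -/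
def fullPowModel (M : KModel) : TriModel where
  W := Set M.W
  ge := fun X Y => Y ⊆ X
  R := fun X Y => M.succT X Y
  S := fun X Y Z => X = Y ∪ Z
  V := fun p => {X | X ⊆ M.V p}

lemma KModel.img_mono (M : KModel) {X Y : Set M.W} (h : X ⊆ Y) :
    M.img X ⊆ M.img Y := by
  rintro w ⟨v, hv, hr⟩; exact ⟨v, h hv, hr⟩

lemma KModel.csat_mono (M : KModel) {X Y : Set M.W} {α : CForm} (h : Y ⊆ X)
    (hs : M.csat X α) : M.csat Y α := by
  induction α generalizing X Y with
  | var p => exact h.trans hs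
  | bot => subst hs; exact Set.eq_empty_of_subset_empty h
  | neg α ih => exact fun w hw => hs w (h hw)
  | and α β ih1 ih2 => exact ⟨ih1 h hs.1, ih2 h hs.2⟩
  | tensor α β ih1 ih2 =>
    obtain ⟨A, B, rfl, hA, hB⟩ := hs
    refine ⟨A ∩ Y, B ∩ Y, ?_, ih1 Set.inter_subset_left hA,
      ih2 Set.inter_subset_left hB⟩
    ext w
    simp only [Set.mem_union, Set.mem_inter_iff]
    constructor
    · intro hw; rcases h hw with hA' | hB'
      · exact Or.inl ⟨hA', hw⟩
      · exact Or.inr ⟨hB', hw⟩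
    · rintro (⟨_, hw⟩ | ⟨_, hw⟩) <;> exact hw
  | impl α β ih1 ih2 => exact fun Z hZ => hs Z (hZ.trans h)
  | box α ih => exact ih (M.img_mono h) hs
  | dia α ih =>
    obtain ⟨Z, ⟨hZ1, hZ2⟩, hZs⟩ := hs
    refine ⟨Z ∩ M.img Y, ⟨Set.inter_subset_right, fun w hw => ?_⟩,
      ih Set.inter_subset_left hZs⟩
    obtain ⟨u, hu, hr⟩ := hZ2 w (h hw)
    exact ⟨u, ⟨hu, ⟨w, hw, hr⟩⟩, hr⟩

lemma KModel.sat_mono (M : KModel) {X Y : Set M.W} {φ : MTm} (h : Y ⊆ X)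
    (hs : M.sat X φ) : M.sat Y φ := by
  induction φ generalizing X Y with
  | var p => exact h.trans hs
  | bot => subst hs; exact Set.eq_empty_of_subset_empty h
  | cneg α => exact fun w hw => hs w (h hw)
  | and φ ψ ih1 ih2 => exact ⟨ih1 h hs.1, ih2 h hs.2⟩
  | tensor φ ψ ih1 ih2 =>
    obtain ⟨A, B, rfl, hA, hB⟩ := hs
    refine ⟨A ∩ Y, B ∩ Y, ?_, ih1 Set.inter_subset_left hA,
      ih2 Set.inter_subset_left hB⟩
    ext w
    simp only [Set.mem_union, Set.mem_inter_iff]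
    constructor
    · intro hw; rcases h hw with hA' | hB'
      · exact Or.inl ⟨hA', hw⟩
      · exact Or.inr ⟨hB', hw⟩
    · rintro (⟨_, hw⟩ | ⟨_, hw⟩) <;> exact hw
  | or φ ψ ih1 ih2 => exact hs.imp (ih1 h) (ih2 h)
  | impl φ ψ ih1 ih2 => exact fun Z hZ => hs Z (hZ.trans h)
  | box φ ih => exact ih (M.img_mono h) hs
  | dia φ ih =>
    obtain ⟨Z, ⟨hZ1, hZ2⟩, hZs⟩ := hs
    refine ⟨Z ∩ M.img Y, ⟨Set.inter_subset_right, fun w hw => ?_⟩,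
      ih Set.inter_subset_left hZs⟩
    obtain ⟨u, hu, hr⟩ := hZ2 w (h hw)
    exact ⟨u, ⟨hu, ⟨w, hw, hr⟩⟩, hr⟩

lemma fullPow_isEnd (M : KModel) (X : Set M.W) :
    (fullPowModel M).isEnd X ↔ X = ∅ := by
  constructor
  · intro h; exact (h (∅ : Set M.W) (Set.empty_subset X)).symm
  · rintro rfl Y hY; exact Set.eq_empty_of_subset_empty hY

/-- Auxiliary: for box, the image of a team equals the image of the subteam
of worlds having a successor, and that subteam stands in the succT relation
to the image. -/
lemma KModel.box_aux (M : KModel) (X : Set M.W) :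
    ∃ Y ⊆ X, M.succT Y (M.img X) := by
  refine ⟨{w ∈ X | ∃ u, M.R w u}, fun w hw => hw.1, ?_, ?_⟩
  · rintro u ⟨v, hv, hr⟩; exact ⟨v, ⟨hv, u, hr⟩, hr⟩
  · rintro w ⟨hw, u, hr⟩; exact ⟨u, ⟨w, hw, hr⟩, hr⟩

lemma csat_iff_cbsat (M : KModel) (X : Set M.W) (α : CForm) :
    M.csat X α ↔ (fullPowModel M).cbsat X α := by
  induction α generalizing X with
  | var p => exact Iff.rfl
  | bot => exact (fullPow_isEnd M X).symm
  | neg α ih =>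
    constructor
    · intro h Y hY hYα
      refine (fullPow_isEnd M Y).2 ?_
      by_contra hne
      obtain ⟨w, hw⟩ := Set.nonempty_iff_ne_empty.2 hne
      exact h w (hY hw)
        (M.csat_mono (Set.singleton_subset_iff.2 hw) ((ih Y).2 hYα))
    · intro h w hw hα
      have := (fullPow_isEnd M {w}).1
        (h ({w} : Set M.W) (Set.singleton_subset_iff.2 hw) ((ih {w}).1 hα))
      simp at this
  | and α β ih1 ih2 =>
    exact and_congr (ih1 X) (ih2 X)
  | tensor α β ih1 ih2 =>
    constructor
    · rintro ⟨A, B, hX, hA, hB⟩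
      exact ⟨A, B, hX, (ih1 A).1 hA, (ih2 B).1 hB⟩
    · rintro ⟨A, B, hX, hA, hB⟩
      exact ⟨A, B, hX, (ih1 A).2 hA, (ih2 B).2 hB⟩
  | impl α β ih1 ih2 =>
    constructor
    · intro h Y hY hα; exact (ih2 Y).1 (h Y hY ((ih1 Y).2 hα))
    · intro h Y hY hα; exact (ih2 Y).2 (h Y hY ((ih1 Y).1 hα))
  | box α ih =>
    constructor
    · intro h Y Z hY hZ
      exact (ih Z).1 (M.csat_mono (hZ.1.trans (M.img_mono hY)) h)
    · intro h
      obtain ⟨Y, hY, hsucc⟩ := M.box_aux X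
      exact (ih _).2 (h Y _ hY hsucc)
  | dia α ih =>
    constructor
    · rintro ⟨Y, hs, hY⟩; exact ⟨Y, hs, (ih Y).1 hY⟩
    · rintro ⟨Y, hs, hY⟩; exact ⟨Y, hs, (ih Y).2 hY⟩

/-- STATEMENT 17: team semantics over M coincides with the single-world
semantics ⊩• over the full powerset model M•, for every team (including ∅)
and every MT₀⁻-formula. -/
theorem team_semantics_eq_full_powerset_semantics (M : KModel) (X : Set M.W)
    (φ : MTm) :
    M.sat X φ ↔ (fullPowModel M).bsat X φ := by
  induction φ generalizing X with
  | var p => exact Iff.rfl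
  | bot => exact (fullPow_isEnd M X).symm
  | cneg α =>
    constructor
    · intro h Y hY hYα
      refine (fullPow_isEnd M Y).2 ?_
      by_contra hne
      obtain ⟨w, hw⟩ := Set.nonempty_iff_ne_empty.2 hne
      exact h w (hY hw)
        (M.csat_mono (Set.singleton_subset_iff.2 hw) ((csat_iff_cbsat M Y α).2 hYα))
    · intro h w hw hα
      have := (fullPow_isEnd M {w}).1
        (h ({w} : Set M.W) (Set.singleton_subset_iff.2 hw) ((csat_iff_cbsat M {w} α).1 hα))
      simp at this
  | and φ ψ ih1 ih2 => exact and_congr (ih1 X) (ih2 X)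
  | tensor φ ψ ih1 ih2 =>
    constructor
    · rintro ⟨A, B, hX, hA, hB⟩; exact ⟨A, B, hX, (ih1 A).1 hA, (ih2 B).1 hB⟩
    · rintro ⟨A, B, hX, hA, hB⟩; exact ⟨A, B, hX, (ih1 A).2 hA, (ih2 B).2 hB⟩
  | or φ ψ ih1 ih2 => exact or_congr (ih1 X) (ih2 X)
  | impl φ ψ ih1 ih2 =>
    constructor
    · intro h Y hY hα; exact (ih2 Y).1 (h Y hY ((ih1 Y).2 hα))
    · intro h Y hY hα; exact (ih2 Y).2 (h Y hY ((ih1 Y).1 hα))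
  | box φ ih =>
    constructor
    · intro h Y Z hY hZ
      exact (ih Z).1 (M.sat_mono (hZ.1.trans (M.img_mono hY)) h)
    · intro h
      obtain ⟨Y, hY, hsucc⟩ := M.box_aux X
      exact (ih _).2 (h Y _ hY hsucc)
  | dia φ ih =>
    constructor
    · rintro ⟨Y, hs, hY⟩; exact ⟨Y, hs, (ih Y).1 hY⟩
    · rintro ⟨Y, hs, hY⟩; exact ⟨Y, hs, (ih Y).2 hY⟩
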